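/- Let $A : \mathcal{D} \to \mathcal{D}$ be a linear operator on a dense subspace of a Hilbert space with adjoint restriction $A^\dagger := A^*|_{\mathcal{D}} : \mathcal{D} \to \mathcal{D}$. Let $W \subset V \subset \mathcal{D}$ be finite-dimensional subspaces with projections $P_W \le P_V$, and suppose $P_V A \subset A P_W$ (hence $P_W A^\dagger \subset A^\dagger P_V$). Then $A_V (A_V)^* + (A_V)^* A_V = (A A^\dagger + A^\dagger A)_V - (P_V - P_W) A^\dagger A (P_V - P_W)$, where $X_V := P_V X P_V$. In particular $A_V(A_V)^* + (A_V)^*A_V \le (AA^\dagger + A^\dagger A)_V$ as quadratic forms. -/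

import Mathlib

set_option linter.unusedSectionVars false
set_option maxHeartbeats 1000000


variable {H : Type*} [NormedAddCommGroup H] [InnerProductSpace ℂ H] [CompleteSpace H]

/-- The compression `X_V := P_V X P_V : H → H` of an operator `X : 𝒟 → 𝒟`
to a finite-dimensional subspace `V ≤ 𝒟`. -/
noncomputable def compress (D V : Submodule ℂ H) (hVD : V ≤ D)
    [FiniteDimensional ℂ V] (X : D →ₗ[ℂ] D) : H →L[ℂ] H :=
  (LinearMap.toContinuousLinearMap
      ((V.subtypeL ∘L Submodule.orthogonalProjectionOnto V).toLinearMap.comp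
        (D.subtype.comp (X.comp (Submodule.inclusion hVD)))))
    ∘L (Submodule.orthogonalProjectionOnto V : H →L[ℂ] V)

lemma compress_apply (D V : Submodule ℂ H) (hVD : V ≤ D)
    [FiniteDimensional ℂ V] (X : D →ₗ[ℂ] D) (x : H) :
    compress D V hVD X x
      = ((Submodule.orthogonalProjectionOnto V
          ((X (Submodule.inclusion hVD (Submodule.orthogonalProjectionOnto V x)) : D) : H) : V) : H) := rfl

lemma orthogonalProjection_orthogonalProjection_of_le {U V : Submodule ℂ H}
    [U.HasOrthogonalProjection] [V.HasOrthogonalProjection] (h : U ≤ V) (x : H) :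
    Submodule.orthogonalProjectionOnto U ((Submodule.orthogonalProjectionOnto V x : V) : H)
      = Submodule.orthogonalProjectionOnto U x :=
  Submodule.orthogonalProjectionOnto_starProjection_of_le h x

lemma inner_orthogonalProjection_left_eq_right (K : Submodule ℂ H) [K.HasOrthogonalProjection]
    (u v : H) :
    inner ℂ ((Submodule.orthogonalProjectionOnto K u : K) : H) v
      = inner ℂ u ((Submodule.orthogonalProjectionOnto K v : K) : H) :=
  Submodule.inner_starProjection_left_eq_right K u v

lemma orthogonalProjection_eq_self_iff {K : Submodule ℂ H} [K.HasOrthogonalProjection] {v : H} :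
    ((Submodule.orthogonalProjectionOnto K v : K) : H) = v ↔ v ∈ K :=
  Submodule.starProjection_eq_self_iff

section helpers

variable (D V W : Submodule ℂ H) (hVD : V ≤ D) (hWV : W ≤ V)
    [FiniteDimensional ℂ V] [FiniteDimensional ℂ W]
    (A Adag : D →ₗ[ℂ] D)

lemma compress_A_apply
    (hPA : ∀ x : D,
      (V.subtypeL ∘L Submodule.orthogonalProjectionOnto V) ((A x : H))
        = ((A (Submodule.inclusion (hWV.trans hVD) (Submodule.orthogonalProjectionOnto W (x : H))) : D) : H))
    (x : H) :
    compress D V hVD A x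
      = ((A (Submodule.inclusion (hWV.trans hVD) (Submodule.orthogonalProjectionOnto W x)) : D) : H) := by
  have h := hPA (Submodule.inclusion hVD (Submodule.orthogonalProjectionOnto V x))
  rw [compress_apply]
  have h2 : ((Submodule.inclusion hVD (Submodule.orthogonalProjectionOnto V x) : D) : H)
      = ((Submodule.orthogonalProjectionOnto V x : V) : H) := rfl
  rw [h2, orthogonalProjection_orthogonalProjection_of_le hWV] at h
  exact h

lemma compress_adjoint
    (hadj : ∀ x y : D, (inner ℂ ((A x : H)) ((y : D) : H) : ℂ) = inner ℂ ((x : D) : H) ((Adag y : H))) :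
    ContinuousLinearMap.adjoint (compress D V hVD A) = compress D V hVD Adag := by
  symm
  rw [ContinuousLinearMap.eq_adjoint_iff]
  intro x y
  rw [compress_apply, compress_apply]
  set bx := Submodule.inclusion hVD (Submodule.orthogonalProjectionOnto V x) with hbx
  set by' := Submodule.inclusion hVD (Submodule.orthogonalProjectionOnto V y) with hby
  calc (inner ℂ (((Submodule.orthogonalProjectionOnto V ((Adag bx : D) : H) : V) : H)) y : ℂ)
      = inner ℂ ((Adag bx : D) : H) ((Submodule.orthogonalProjectionOnto V y : V) : H) :=
        inner_orthogonalProjection_left_eq_right V _ y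
    _ = (starRingEnd ℂ) (inner ℂ ((Submodule.orthogonalProjectionOnto V y : V) : H) ((Adag bx : D) : H)) :=
        (inner_conj_symm _ _).symm
    _ = (starRingEnd ℂ) (inner ℂ ((A by' : D) : H) ((bx : D) : H)) := by
        rw [hadj by' bx]; rfl
    _ = inner ℂ ((bx : D) : H) ((A by' : D) : H) := inner_conj_symm _ _
    _ = inner ℂ ((Submodule.orthogonalProjectionOnto V x : V) : H) ((A by' : D) : H) := rfl
    _ = inner ℂ x (((Submodule.orthogonalProjectionOnto V ((A by' : D) : H) : V) : H)) :=
        inner_orthogonalProjection_left_eq_right V x _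

lemma key_zero
    (hadj : ∀ x y : D, (inner ℂ ((A x : H)) ((y : D) : H) : ℂ) = inner ℂ ((x : D) : H) ((Adag y : H)))
    (hPA : ∀ x : D,
      (V.subtypeL ∘L Submodule.orthogonalProjectionOnto V) ((A x : H))
        = ((A (Submodule.inclusion (hWV.trans hVD) (Submodule.orthogonalProjectionOnto W (x : H))) : D) : H))
    (u : D) (hu : Submodule.orthogonalProjectionOnto W (u : H) = 0) :
    Submodule.orthogonalProjectionOnto W ((Adag (A u) : D) : H) = 0 := by
  rw [Submodule.orthogonalProjectionOnto_eq_zero_iff, Submodule.mem_orthogonal]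
  intro w hw
  have h1 := hadj (Submodule.inclusion (hWV.trans hVD) ⟨w, hw⟩) (A u)
  have hcw : ((Submodule.inclusion (hWV.trans hVD) (⟨w, hw⟩ : W) : D) : H) = w := rfl
  rw [hcw] at h1
  rw [← h1]
  -- goal : ⟪↑(A (ι ⟨w,hw⟩)), ↑(A u)⟫ = 0
  have h2 := hPA (Submodule.inclusion (hWV.trans hVD) ⟨w, hw⟩)
  rw [hcw] at h2
  have hww : Submodule.orthogonalProjectionOnto W w = ⟨w, hw⟩ :=
    Submodule.orthogonalProjectionOnto_mem_subspace_eq_self (⟨w, hw⟩ : W)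
  rw [hww] at h2
  -- h2 : (V.subtypeL ∘L Submodule.orthogonalProjectionOnto V) ↑(A (ι⟨w,hw⟩)) = ↑(A (ι⟨w,hw⟩))
  simp only [ContinuousLinearMap.comp_apply, Submodule.subtypeL_apply] at h2
  rw [← h2, inner_orthogonalProjection_left_eq_right]
  -- goal : ⟪↑(A (ι⟨w,hw⟩)), ↑(P_V ↑(A u))⟫ = 0
  have h3 := hPA u
  rw [hu] at h3
  simp only [map_zero, ContinuousLinearMap.comp_apply, Submodule.subtypeL_apply,
    Submodule.coe_zero] at h3
  rw [h3, inner_zero_right]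

end helpers


/-- If `P_V A ⊆ A P_W` for finite-dimensional `W ⊆ V ⊆ 𝒟`, then
`A_V A_V^* + A_V^* A_V = (AA† + A†A)_V − (P_V−P_W) A†A (P_V−P_W)`;
in particular `A_V A_V^* + A_V^* A_V ≤ (AA† + A†A)_V` as quadratic forms. -/
theorem compress_anticommutator
    (D V W : Submodule ℂ H) (hD : Dense (D : Set H))
    (hVD : V ≤ D) (hWV : W ≤ V)
    [FiniteDimensional ℂ V] [FiniteDimensional ℂ W]
    (A Adag : D →ₗ[ℂ] D)
    (hadj : ∀ x y : D, (inner ℂ ((A x : H)) ((y : D) : H) : ℂ) = inner ℂ ((x : D) : H) ((Adag y : H)))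
    (hPA : ∀ x : D,
      (V.subtypeL ∘L Submodule.orthogonalProjectionOnto V) ((A x : H))
        = ((A (Submodule.inclusion (hWV.trans hVD) (Submodule.orthogonalProjectionOnto W (x : H))) : D) : H)) :
    (compress D V hVD A ∘L ContinuousLinearMap.adjoint (compress D V hVD A)
        + ContinuousLinearMap.adjoint (compress D V hVD A) ∘L compress D V hVD A
      = compress D V hVD (A ∘ₗ Adag + Adag ∘ₗ A)
        - (V.subtypeL ∘L Submodule.orthogonalProjectionOnto V - W.subtypeL ∘L Submodule.orthogonalProjectionOnto W)
            ∘L compress D V hVD (Adag ∘ₗ A)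
            ∘L (V.subtypeL ∘L Submodule.orthogonalProjectionOnto V - W.subtypeL ∘L Submodule.orthogonalProjectionOnto W)) ∧
    ∀ x : H,
      (inner ℂ x ((compress D V hVD A ∘L ContinuousLinearMap.adjoint (compress D V hVD A)
          + ContinuousLinearMap.adjoint (compress D V hVD A) ∘L compress D V hVD A) x) : ℂ).re
        ≤ (inner ℂ x ((compress D V hVD (A ∘ₗ Adag + Adag ∘ₗ A)) x) : ℂ).re := by
  have hAd : ContinuousLinearMap.adjoint (compress D V hVD A) = compress D V hVD Adag :=
    compress_adjoint D V hVD A Adag hadj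
  have hmain : (compress D V hVD A ∘L ContinuousLinearMap.adjoint (compress D V hVD A)
        + ContinuousLinearMap.adjoint (compress D V hVD A) ∘L compress D V hVD A
      = compress D V hVD (A ∘ₗ Adag + Adag ∘ₗ A)
        - (V.subtypeL ∘L Submodule.orthogonalProjectionOnto V - W.subtypeL ∘L Submodule.orthogonalProjectionOnto W)
            ∘L compress D V hVD (Adag ∘ₗ A)
            ∘L (V.subtypeL ∘L Submodule.orthogonalProjectionOnto V - W.subtypeL ∘L Submodule.orthogonalProjectionOnto W)) := by
    ext x
    simp only [ContinuousLinearMap.add_apply, ContinuousLinearMap.comp_apply,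
      ContinuousLinearMap.sub_apply, Submodule.subtypeL_apply, hAd]
    set ax := Submodule.inclusion (hWV.trans hVD) (Submodule.orthogonalProjectionOnto W x) with hax
    set bx := Submodule.inclusion hVD (Submodule.orthogonalProjectionOnto V x) with hbx
    -- Term 1 : A_V A†_V x = P_V (A A† b x)
    have e1 : compress D V hVD A (compress D V hVD Adag x)
        = ((Submodule.orthogonalProjectionOnto V ((A (Adag bx) : D) : H) : V) : H) := by
      rw [compress_A_apply D V W hVD hWV A hPA]
      have h : Submodule.orthogonalProjectionOnto W (compress D V hVD Adag x)
          = Submodule.orthogonalProjectionOnto W ((Adag bx : D) : H) := by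
        rw [compress_apply]; exact orthogonalProjection_orthogonalProjection_of_le hWV _
      rw [h]
      have h2 := hPA (Adag bx)
      simp only [ContinuousLinearMap.comp_apply, Submodule.subtypeL_apply] at h2
      exact h2.symm
    -- Term 2 : A†_V A_V x = P_V (A† A a x)
    have hmem : ((A ax : D) : H) ∈ V := by
      have h := compress_A_apply D V W hVD hWV A hPA x
      rw [compress_apply] at h
      rw [← h]
      exact Submodule.coe_mem _
    have e2 : compress D V hVD Adag (compress D V hVD A x)
        = ((Submodule.orthogonalProjectionOnto V ((Adag (A ax) : D) : H) : V) : H) := by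
      have hb : Submodule.inclusion hVD (Submodule.orthogonalProjectionOnto V (compress D V hVD A x))
          = A ax := by
        apply Subtype.ext
        show ((Submodule.orthogonalProjectionOnto V (compress D V hVD A x) : V) : H) = ((A ax : D) : H)
        rw [compress_A_apply D V W hVD hWV A hPA x]
        exact orthogonalProjection_eq_self_iff.mpr hmem
      rw [compress_apply, hb]
    -- RHS first part
    have e3 : compress D V hVD (A ∘ₗ Adag + Adag ∘ₗ A) x
        = ((Submodule.orthogonalProjectionOnto V ((A (Adag bx) : D) : H) : V) : H)
          + ((Submodule.orthogonalProjectionOnto V ((Adag (A bx) : D) : H) : V) : H) := by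
      rw [compress_apply]
      simp only [LinearMap.add_apply, LinearMap.comp_apply, Submodule.coe_add, map_add,
        ← hbx]
    -- RHS second part
    have hu : Submodule.orthogonalProjectionOnto W ((bx - ax : D) : H) = 0 := by
      have h : ((bx - ax : D) : H)
          = ((Submodule.orthogonalProjectionOnto V x : V) : H) - ((Submodule.orthogonalProjectionOnto W x : W) : H) := rfl
      rw [h, map_sub, orthogonalProjection_orthogonalProjection_of_le hWV,
        Submodule.orthogonalProjectionOnto_mem_subspace_eq_self, sub_self]
    have e4a : Submodule.inclusion hVD (Submodule.orthogonalProjectionOnto V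
          (((Submodule.orthogonalProjectionOnto V x : V) : H) - ((Submodule.orthogonalProjectionOnto W x : W) : H)))
        = bx - ax := by
      apply Subtype.ext
      show ((Submodule.orthogonalProjectionOnto V _ : V) : H) = ((bx - ax : D) : H)
      rw [map_sub]
      have hv : Submodule.orthogonalProjectionOnto V ((Submodule.orthogonalProjectionOnto V x : V) : H)
          = Submodule.orthogonalProjectionOnto V x := Submodule.orthogonalProjectionOnto_mem_subspace_eq_self _
      have hw2 : ((Submodule.orthogonalProjectionOnto V ((Submodule.orthogonalProjectionOnto W x : W) : H) : V) : H)
          = ((Submodule.orthogonalProjectionOnto W x : W) : H) :=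
        orthogonalProjection_eq_self_iff.mpr (hWV (Submodule.coe_mem _))
      rw [Submodule.coe_sub, hv, hw2]
      rfl
    have e4 : ((Submodule.orthogonalProjectionOnto V (compress D V hVD (Adag ∘ₗ A)
            (((Submodule.orthogonalProjectionOnto V x : V) : H) - ((Submodule.orthogonalProjectionOnto W x : W) : H))) : V) : H)
          - ((Submodule.orthogonalProjectionOnto W (compress D V hVD (Adag ∘ₗ A)
            (((Submodule.orthogonalProjectionOnto V x : V) : H) - ((Submodule.orthogonalProjectionOnto W x : W) : H))) : W) : H)
        = ((Submodule.orthogonalProjectionOnto V ((Adag (A bx) : D) : H) : V) : H)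
          - ((Submodule.orthogonalProjectionOnto V ((Adag (A ax) : D) : H) : V) : H) := by
      have ht : compress D V hVD (Adag ∘ₗ A)
            (((Submodule.orthogonalProjectionOnto V x : V) : H) - ((Submodule.orthogonalProjectionOnto W x : W) : H))
          = ((Submodule.orthogonalProjectionOnto V ((Adag (A (bx - ax)) : D) : H) : V) : H) := by
        rw [compress_apply, e4a]; rfl
      have hPVt : ((Submodule.orthogonalProjectionOnto V (compress D V hVD (Adag ∘ₗ A)
            (((Submodule.orthogonalProjectionOnto V x : V) : H) - ((Submodule.orthogonalProjectionOnto W x : W) : H))) : V) : H)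
          = compress D V hVD (Adag ∘ₗ A)
            (((Submodule.orthogonalProjectionOnto V x : V) : H) - ((Submodule.orthogonalProjectionOnto W x : W) : H)) :=
        orthogonalProjection_eq_self_iff.mpr (by rw [ht]; exact Submodule.coe_mem _)
      have hPWt : Submodule.orthogonalProjectionOnto W (compress D V hVD (Adag ∘ₗ A)
            (((Submodule.orthogonalProjectionOnto V x : V) : H) - ((Submodule.orthogonalProjectionOnto W x : W) : H))) = 0 := by
        rw [ht, orthogonalProjection_orthogonalProjection_of_le hWV]
        exact key_zero D V W hVD hWV A Adag hadj hPA (bx - ax) hu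
      rw [hPVt, hPWt, ht]
      have hsplit : ((Submodule.orthogonalProjectionOnto V ((Adag (A (bx - ax)) : D) : H) : V) : H)
          = ((Submodule.orthogonalProjectionOnto V ((Adag (A bx) : D) : H) : V) : H)
            - ((Submodule.orthogonalProjectionOnto V ((Adag (A ax) : D) : H) : V) : H) := by
        rw [map_sub, map_sub]
        rw [show ((Adag (A bx) - Adag (A ax) : D) : H)
            = ((Adag (A bx) : D) : H) - ((Adag (A ax) : D) : H) from rfl]
        rw [map_sub, Submodule.coe_sub]
      rw [hsplit]
      simp
    rw [e1, e2, e3, e4]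
    abel
  have hQsym : ∀ u v : H,
      (inner ℂ u ((V.subtypeL ∘L Submodule.orthogonalProjectionOnto V - W.subtypeL ∘L Submodule.orthogonalProjectionOnto W) v) : ℂ)
        = inner ℂ ((V.subtypeL ∘L Submodule.orthogonalProjectionOnto V - W.subtypeL ∘L Submodule.orthogonalProjectionOnto W) u) v := by
    intro u v
    simp only [ContinuousLinearMap.sub_apply, ContinuousLinearMap.comp_apply,
      Submodule.subtypeL_apply, inner_sub_left, inner_sub_right,
      inner_orthogonalProjection_left_eq_right]
  have hCpos : ∀ y : H, 0 ≤ (inner ℂ y (compress D V hVD (Adag ∘ₗ A) y) : ℂ).re := by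
    intro y
    have hval : (inner ℂ y (compress D V hVD (Adag ∘ₗ A) y) : ℂ)
        = inner ℂ ((A (Submodule.inclusion hVD (Submodule.orthogonalProjectionOnto V y)) : D) : H)
            ((A (Submodule.inclusion hVD (Submodule.orthogonalProjectionOnto V y)) : D) : H) := by
      rw [compress_apply, ← inner_orthogonalProjection_left_eq_right]
      have h2 : ((Submodule.inclusion hVD (Submodule.orthogonalProjectionOnto V y) : D) : H)
          = ((Submodule.orthogonalProjectionOnto V y : V) : H) := rfl
      rw [← h2]
      exact (hadj (Submodule.inclusion hVD (Submodule.orthogonalProjectionOnto V y))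
        (A (Submodule.inclusion hVD (Submodule.orthogonalProjectionOnto V y)))).symm
    rw [hval]
    simpa using inner_self_nonneg (𝕜 := ℂ)
      (x := ((A (Submodule.inclusion hVD (Submodule.orthogonalProjectionOnto V y)) : D) : H))
  have hpos : ∀ x : H, 0 ≤ (inner ℂ x
      (((V.subtypeL ∘L Submodule.orthogonalProjectionOnto V - W.subtypeL ∘L Submodule.orthogonalProjectionOnto W)
          ∘L compress D V hVD (Adag ∘ₗ A)
          ∘L (V.subtypeL ∘L Submodule.orthogonalProjectionOnto V - W.subtypeL ∘L Submodule.orthogonalProjectionOnto W)) x) : ℂ).re := by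
    intro x
    rw [ContinuousLinearMap.comp_apply, ContinuousLinearMap.comp_apply, hQsym]
    exact hCpos _
  refine ⟨hmain, fun x => ?_⟩
  rw [hmain]
  simp only [ContinuousLinearMap.sub_apply, inner_sub_right, Complex.sub_re]
  linarith [hpos x]
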